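/- Let f : (-1, ∞) → ℝ satisfy f(0) = 0 and f' < 0 (so f is strictly decreasing), and suppose Y : ℝ → (-1, ∞) is a continuous T-periodic solution of Y' = f(Y) + A sin(ωt), with T = 2π/ω and A > 0. If moreover f is strictly convex, then the mean value of Y over one period is strictly positive: (1/T) ∫₀ᵀ Y(t) dt > 0. -/

import Mathlib

open Real Set Filter intervalIntegral
open MeasureTheory

/-- The mean value of the periodic solution of y' = f(y) + A sin(ωt) is
strictly positive when f is strictly decreasing, strictly convex, f(0)=0. -/
theorem mean_dilatation_pos
    (f Y : ℝ → ℝ) (A ω T : ℝ)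
    (hω : 0 < ω) (hT : T = 2 * Real.pi / ω) (hA : 0 < A)
    (hf0 : f 0 = 0)
    (hfanti : StrictAntiOn f (Set.Ioi (-1)))
    (hfconv : StrictConvexOn ℝ (Set.Ioi (-1)) f)
    (hYcont : Continuous Y)
    (hYmem : ∀ t, Y t ∈ Set.Ioi (-1 : ℝ))
    (hYode : ∀ t, HasDerivAt Y (f (Y t) + A * Real.sin (ω * t)) t)
    (hYper : ∀ t, Y (t + T) = Y t) :
    0 < (1 / T) * ∫ t in (0:ℝ)..T, Y t := by
  have hπ := Real.pi_pos
  have hTpos : 0 < T := by rw [hT]; positivity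
  have hωT : ω * T = 2 * Real.pi := by rw [hT]; field_simp
  -- continuity of f on the open set
  have hfcont : ContinuousOn f (Set.Ioi (-1 : ℝ)) := hfconv.convexOn.continuousOn isOpen_Ioi
  have hfYcont : Continuous (fun t => f (Y t)) := hfcont.comp_continuous hYcont hYmem
  have hgcont : Continuous (fun t => f (Y t) + A * Real.sin (ω * t)) := hfYcont.add (continuous_const.mul (Real.continuous_sin.comp (continuous_const.mul continuous_id)))
  -- FTC over a period
  have hYT : Y T = Y 0 := by simpa using hYper 0
  have hFTC : (∫ t in (0:ℝ)..T, (f (Y t) + A * Real.sin (ω * t))) = Y T - Y 0 :=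
    intervalIntegral.integral_eq_sub_of_hasDerivAt (fun t _ => hYode t)
      (hgcont.intervalIntegrable _ _)
  have hsin : (∫ t in (0:ℝ)..T, Real.sin (ω * t)) = 0 := by
    have := intervalIntegral.integral_comp_mul_left (a := (0:ℝ)) (b := T)
      (fun x => Real.sin x) hω.ne'
    rw [this]
    simp [hωT, integral_sin]
  have hfY0 : (∫ t in (0:ℝ)..T, f (Y t)) = 0 := by
    have hsplit : (∫ t in (0:ℝ)..T, (f (Y t) + A * Real.sin (ω * t)))
        = (∫ t in (0:ℝ)..T, f (Y t)) + (∫ t in (0:ℝ)..T, A * Real.sin (ω * t)) :=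
      intervalIntegral.integral_add (hfYcont.intervalIntegrable _ _) (((continuous_const.mul (Real.continuous_sin.comp (continuous_const.mul continuous_id)))).intervalIntegrable _ _)
    have h2 : (∫ t in (0:ℝ)..T, A * Real.sin (ω * t)) = 0 := by
      rw [intervalIntegral.integral_const_mul, hsin, mul_zero]
    rw [hsplit, h2, hYT] at hFTC
    linarith
  -- setup for Jensen
  set μ : Measure ℝ := volume.restrict (Set.Ioc (0:ℝ) T) with hμdef
  haveI hfin : IsFiniteMeasure μ := ⟨by
    simp [hμdef, Real.volume_Ioc, Measure.restrict_apply]⟩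
  have hμuniv : μ Set.univ = ENNReal.ofReal T := by
    simp [hμdef, Real.volume_Ioc, Measure.restrict_apply]
  have hμne : μ Set.univ ≠ 0 := by
    rw [hμuniv]; simp [hTpos, ENNReal.ofReal_eq_zero, not_le]
  haveI : NeZero μ := ⟨fun h => hμne (by simp [h])⟩
  -- min and max of Y on [0, T]
  obtain ⟨tm, htm, hmin⟩ := isCompact_Icc.exists_isMinOn (Set.nonempty_Icc.2 hTpos.le)
    hYcont.continuousOn
  obtain ⟨tM, htM, hmax⟩ := isCompact_Icc.exists_isMaxOn (Set.nonempty_Icc.2 hTpos.le)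
    hYcont.continuousOn
  set m := Y tm with hm
  set M := Y tM with hM
  have hmM : m ≤ M := hmin htM
  have hsub : Set.Icc m M ⊆ Set.Ioi (-1 : ℝ) := fun x hx =>
    lt_of_lt_of_le (hYmem tm) hx.1
  have hfs : ∀ᵐ x ∂μ, Y x ∈ Set.Icc m M := by
    rw [hμdef, ae_restrict_iff' measurableSet_Ioc]
    exact Filter.Eventually.of_forall fun x hx =>
      ⟨hmin (Set.Ioc_subset_Icc_self hx), hmax (Set.Ioc_subset_Icc_self hx)⟩
  have hfi : Integrable Y μ := (hYcont.integrableOn_Ioc)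
  have hgi : Integrable (f ∘ Y) μ := (hfYcont.integrableOn_Ioc)
  -- the average of Y
  set c := ⨍ x, Y x ∂μ with hc
  have hcval : c = T⁻¹ * ∫ t in (0:ℝ)..T, Y t := by
    rw [hc, average_eq, measureReal_def, hμuniv, ENNReal.toReal_ofReal hTpos.le, smul_eq_mul,
      intervalIntegral.integral_of_le hTpos.le]
  have havg_g : (⨍ x, f (Y x) ∂μ) = 0 := by
    rw [average_eq, measureReal_def, hμuniv, ENNReal.toReal_ofReal hTpos.le, smul_eq_mul]
    have : (∫ x, f (Y x) ∂μ) = ∫ t in (0:ℝ)..T, f (Y t) := by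
      rw [intervalIntegral.integral_of_le hTpos.le]
    rw [this, hfY0, mul_zero]
  -- strict Jensen
  have hfconv' : StrictConvexOn ℝ (Set.Icc m M) f := hfconv.subset hsub (convex_Icc m M)
  have hjensen := hfconv'.ae_eq_const_or_map_average_lt (hfcont.mono hsub) isClosed_Icc
    hfs hfi hgi
  rcases hjensen with h | h
  · -- Y is a.e. constant: impossible
    exfalso
    have hconst : ∀ t ∈ Set.Ioo (0:ℝ) T, Y t = c := by
      intro t ht
      by_contra hne
      have hopen : IsOpen ({x | Y x ≠ c} ∩ Set.Ioo 0 T) :=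
        (isOpen_ne.preimage hYcont).inter isOpen_Ioo
      have hpos : 0 < volume ({x | Y x ≠ c} ∩ Set.Ioo 0 T) :=
        hopen.measure_pos volume ⟨t, hne, ht⟩
      have hmeas : MeasurableSet {x | Y x ≠ c} :=
        (isOpen_ne.preimage hYcont).measurableSet
      have h0 : μ {x | Y x ≠ c} = 0 := by
        have := ae_iff.1 h
        simpa [Function.const, ← hc] using this
      have hnull : volume ({x | Y x ≠ c} ∩ Set.Ioc 0 T) = 0 := by
        rw [hμdef, Measure.restrict_apply hmeas] at h0
        exact h0
      have : volume ({x | Y x ≠ c} ∩ Set.Ioo 0 T) = 0 :=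
        measure_mono_null (Set.inter_subset_inter_right _ Set.Ioo_subset_Ioc_self) hnull
      exact hpos.ne' this
    -- derivative is zero on Ioo 0 T
    have hderiv0 : ∀ t ∈ Set.Ioo (0:ℝ) T, f (Y t) + A * Real.sin (ω * t) = 0 := by
      intro t ht
      have hev : Y =ᶠ[nhds t] fun _ => c :=
        Filter.eventually_of_mem (Ioo_mem_nhds ht.1 ht.2) hconst
      have : HasDerivAt Y 0 t := (hasDerivAt_const t c).congr_of_eventuallyEq hev
      exact (hYode t).unique this
    have ht1 : Real.pi / (2 * ω) ∈ Set.Ioo (0:ℝ) T := by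
      constructor
      · positivity
      · rw [hT]; rw [div_lt_div_iff₀ (by positivity) hω]; nlinarith
    have ht2 : 3 * Real.pi / (2 * ω) ∈ Set.Ioo (0:ℝ) T := by
      constructor
      · positivity
      · rw [hT]; rw [div_lt_div_iff₀ (by positivity) hω]; nlinarith
    have hs1 : Real.sin (ω * (Real.pi / (2 * ω))) = 1 := by
      rw [show ω * (Real.pi / (2 * ω)) = Real.pi / 2 by field_simp]
      exact Real.sin_pi_div_two
    have hs2 : Real.sin (ω * (3 * Real.pi / (2 * ω))) = -1 := by
      rw [show ω * (3 * Real.pi / (2 * ω)) = Real.pi + Real.pi / 2 by field_simp; ring]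
      rw [show Real.pi + Real.pi / 2 = Real.pi/2 + Real.pi by ring, Real.sin_add_pi, Real.sin_pi_div_two]
    have e1 := hderiv0 _ ht1
    have e2 := hderiv0 _ ht2
    rw [hs1] at e1
    rw [hs2] at e2
    have hy1 : Y (Real.pi / (2 * ω)) = c := hconst _ ht1
    have hy2 : Y (3 * Real.pi / (2 * ω)) = c := hconst _ ht2
    rw [hy1] at e1; rw [hy2] at e2
    linarith
  · -- strict inequality: f c < 0, hence c > 0
    rw [havg_g, ← hc] at h
    have hcmem : c ∈ Set.Icc m M :=
      (convex_Icc m M).average_mem isClosed_Icc hfs hfi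
    have hcIoi : c ∈ Set.Ioi (-1 : ℝ) := hsub hcmem
    have hcpos : 0 < c := by
      by_contra hle
      push_neg at hle
      rcases lt_or_eq_of_le hle with hlt | heq
      · have := hfanti hcIoi (by norm_num : (0:ℝ) ∈ Set.Ioi (-1:ℝ)) hlt
        rw [hf0] at this
        exact absurd h (by linarith)
      · rw [heq, hf0] at h; linarith
    rw [hcval] at hcpos
    calc (0:ℝ) < T⁻¹ * ∫ t in (0:ℝ)..T, Y t := hcpos
      _ = (1 / T) * ∫ t in (0:ℝ)..T, Y t := by rw [one_div]
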